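/- Let L be a computable learner which EX-succeeds on the uniform (Lebesgue) measure on Cantor space. Then for every binary string σ, setting e = L(σ), there exists n_σ > 2|σ| such that either μ_e(τ)[n_σ] is defined for all strings τ of length at most |σ|, or the proportion of strings τ of length n_σ extending σ such that L(ρ) = L(σ) for all ρ with σ ⊆ ρ ⊆ τ is less than 2^{-|σ|-5}. -/

import Mathlib

open scoped Classical

/-- Binary strings. -/
abbrev BinStr : Type := List Bool

/-- Cantor space: infinite binary sequences ("reals"). -/
abbrev CantorReal : Type := ℕ → Bool

/-- The length-`n` initial segment of a real. -/
def prefixOf (X : CantorReal) (n : ℕ) : BinStr := (List.range n).map X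

/-- A (representation of a) probability measure on Cantor space:
`val σ` is the measure of the basic open set `[σ]`. -/
structure MeasureRep where
  val : BinStr → ℝ
  nonneg : ∀ σ, 0 ≤ val σ
  empty_one : val [] = 1
  additive : ∀ σ : BinStr, val σ = val (σ ++ [false]) + val (σ ++ [true])

/-- A measure is computable if its values are uniformly approximable by rationals. -/
def ComputableMeasure (m : MeasureRep) : Prop :=
  ∃ q : BinStr → ℕ → ℚ, Computable₂ q ∧
    ∀ σ n, |(q σ n : ℝ) - m.val σ| ≤ (2:ℝ) ^ (-(n:ℤ))

/-- A measure is continuous (atomless) if every singleton has measure 0,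
i.e. the measures of the initial segments of any real tend to 0. -/
def ContinuousMeasure (m : MeasureRep) : Prop :=
  ∀ X : CantorReal, ∀ ε : ℝ, 0 < ε → ∃ n, m.val (prefixOf X n) < ε

/-- The uniform (Lebesgue) measure on Cantor space. -/
noncomputable def uniformMeasure : MeasureRep where
  val σ := (2:ℝ) ^ (-(σ.length : ℤ))
  nonneg σ := by positivity
  empty_one := by simp
  additive σ := by
    simp only [List.length_append, List.length_singleton]
    rw [← two_mul, show -((σ.length + 1 : ℕ) : ℤ) = -(σ.length : ℤ) + (-1) by push_cast; ring,
      zpow_add₀ (two_ne_zero) (-(σ.length:ℤ)) (-1)]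
    ring

/-- A finite set of strings is prefix-free (an antichain). -/
def PrefixFree (F : Finset BinStr) : Prop :=
  ∀ σ ∈ F, ∀ τ ∈ F, σ <+: τ → σ = τ

/-- The measure of the open set generated by a set of strings `U`:
the supremum of the measures of finite prefix-free subsets of `U`. -/
noncomputable def openMeas (m : MeasureRep) (U : Set BinStr) : ℝ :=
  sSup { x : ℝ | ∃ F : Finset BinStr, ↑F ⊆ U ∧ PrefixFree F ∧ x = ∑ σ ∈ F, m.val σ }

/-- A Martin-Löf test for `m`: a uniformly c.e. sequence of sets of strings whose
generated open sets have `m`-measure at most `2^{-i}`. -/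
def MLTest (m : MeasureRep) (U : ℕ → Set BinStr) : Prop :=
  REPred (fun p : ℕ × BinStr => p.2 ∈ U p.1) ∧
  ∀ i, openMeas m (U i) ≤ (2:ℝ) ^ (-(i:ℤ))

/-- Martin-Löf randomness of a real with respect to a measure. -/
def MLRandom (m : MeasureRep) (X : CantorReal) : Prop :=
  ∀ U : ℕ → Set BinStr, MLTest m U → ∃ i, ∀ n, prefixOf X n ∉ U i

/-- A standard effective enumeration `(μ_i)` of all partial computable measures,
together with its stagewise computation `conv` (`conv i s σ` holds iff `μ_i(σ)[s]↓`). -/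
structure MeasEnum where
  μ : ℕ → BinStr →. ℝ
  approx : ℕ → BinStr → ℕ →. ℚ
  approx_partrec : Partrec fun x : ℕ × BinStr × ℕ => approx x.1 x.2.1 x.2.2
  approx_dom : ∀ i σ n, (approx i σ n).Dom ↔ (μ i σ).Dom
  approx_close : ∀ i σ n, ∀ q ∈ approx i σ n, ∀ r ∈ μ i σ, |(q:ℝ) - r| ≤ (2:ℝ) ^ (-(n:ℤ))
  empty_dom : ∀ i, (μ i []).Dom
  empty_one : ∀ i, ∀ r ∈ μ i ([] : BinStr), r = (1:ℝ)
  nonneg : ∀ i σ, ∀ r ∈ μ i σ, (0:ℝ) ≤ r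
  down_closed : ∀ i (σ : BinStr) (j : Bool), (μ i (σ ++ [j])).Dom →
    ∀ τ : BinStr, τ.length ≤ σ.length + 1 → (μ i τ).Dom
  additive : ∀ i (σ : BinStr), ∀ r ∈ μ i σ, ∀ a ∈ μ i (σ ++ [false]), ∀ b ∈ μ i (σ ++ [true]),
    r = a + b
  conv : ℕ → ℕ → BinStr → Bool
  conv_computable : Computable fun x : ℕ × ℕ × BinStr => conv x.1 x.2.1 x.2.2
  conv_mono : ∀ i s t σ, s ≤ t → conv i s σ = true → conv i t σ = true
  conv_dom : ∀ i σ, (μ i σ).Dom ↔ ∃ s, conv i s σ = true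
  complete : ∀ m : MeasureRep, ComputableMeasure m → ∃ i, ∀ σ, μ i σ = Part.some (m.val σ)

/-- `μ_i` is total and equals the (computable) measure `m`. -/
def MeasEnum.TotalAt (E : MeasEnum) (i : ℕ) (m : MeasureRep) : Prop :=
  ∀ σ, E.μ i σ = Part.some (m.val σ)

/-- The limit of `L` along `X` exists and equals `i`. -/
def LimEq (L : BinStr → ℕ) (X : CantorReal) (i : ℕ) : Prop :=
  ∃ N, ∀ n ≥ N, L (prefixOf X n) = i

/-- The learner `L` EX-succeeds on the real `X`: the limit of `L` along `X` exists and is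
an index of a total computable measure with respect to which `X` is Martin-Löf random. -/
def EXSuccessAt (E : MeasEnum) (L : BinStr → ℕ) (X : CantorReal) : Prop :=
  ∃ i m, LimEq L X i ∧ E.TotalAt i m ∧ MLRandom m X

/-- The learner `L` EX-succeeds on the measure `m`. -/
def EXSucceedsOn (E : MeasEnum) (L : BinStr → ℕ) (m : MeasureRep) : Prop :=
  ∀ X : CantorReal, MLRandom m X → EXSuccessAt E L X

/-- Codes for oracle partial computable functions. -/
inductive OCode : Type
  | zero | succ | left | right | oracle
  | pair (a b : OCode) | comp (a b : OCode) | prec (a b : OCode) | rfind' (a : OCode)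

/-- Evaluation of an oracle code relative to the oracle `O`. -/
def OCode.eval (O : ℕ →. ℕ) : OCode → ℕ →. ℕ
  | .zero => fun _ => Part.some 0
  | .succ => fun n => Part.some (n + 1)
  | .left => fun n => Part.some (Nat.unpair n).1
  | .right => fun n => Part.some (Nat.unpair n).2
  | .oracle => O
  | .pair a b => fun n => Nat.pair <$> OCode.eval O a n <*> OCode.eval O b n
  | .comp a b => fun n => OCode.eval O b n >>= OCode.eval O a
  | .prec a b =>
    Nat.unpaired fun x y =>
      y.rec (OCode.eval O a x) fun y IH => do
        let i ← IH
        OCode.eval O b (Nat.pair x (Nat.pair y i))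
  | .rfind' a =>
    Nat.unpaired fun x m =>
      (Nat.rfind fun n => (fun v => v = 0) <$> OCode.eval O a (Nat.pair x (n + m))).map (· + m)

/-- A standard numbering of oracle codes. -/
def encodeOCode : OCode → ℕ
  | .zero => 0
  | .succ => 1
  | .left => 2
  | .right => 3
  | .oracle => 4
  | .pair a b => 4 * Nat.pair (encodeOCode a) (encodeOCode b) + 5
  | .comp a b => 4 * Nat.pair (encodeOCode a) (encodeOCode b) + 6
  | .prec a b => 4 * Nat.pair (encodeOCode a) (encodeOCode b) + 7
  | .rfind' a => 4 * encodeOCode a + 8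

/-- Characteristic function of a set of naturals. -/
noncomputable def chi (A : Set ℕ) : ℕ → ℕ := fun n => if n ∈ A then 1 else 0

/-- Characteristic function of a set, as an oracle. -/
noncomputable def chiO (A : Set ℕ) : ℕ →. ℕ := fun n => Part.some (chi A n)

/-- The Turing jump of a set. -/
def jump (A : Set ℕ) : Set ℕ :=
  { e | ∃ c : OCode, encodeOCode c = e ∧ (OCode.eval (chiO A) c e).Dom }

/-- Turing reducibility between sets of naturals. -/
def TuringLE (A B : Set ℕ) : Prop :=
  ∃ c : OCode, ∀ n, OCode.eval (chiO B) c n = Part.some (chi A n)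

/-- The effective join `A ⊕ B`. -/
def joinSet (A B : Set ℕ) : Set ℕ :=
  { n | (n % 2 = 0 ∧ n / 2 ∈ A) ∨ (n % 2 = 1 ∧ n / 2 ∈ B) }

/-- `f : ℕ → ℕ` is computable relative to the oracle `O`. -/
def FunComputableIn (f : ℕ → ℕ) (O : ℕ →. ℕ) : Prop :=
  ∃ c : OCode, ∀ n, OCode.eval O c n = Part.some (f n)

/-- A learner is computable relative to the oracle `O`. -/
def LearnerComputableIn (L : BinStr → ℕ) (O : ℕ →. ℕ) : Prop :=
  ∃ c : OCode, ∀ σ : BinStr, OCode.eval O c (Encodable.encode σ) = Part.some (L σ)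

/-- A learner, viewed as an oracle. -/
def learnerOracle (L : BinStr → ℕ) : ℕ →. ℕ :=
  fun n => Part.some ((Encodable.decode (α := BinStr) n).elim 0 L)

/-- A function `ℕ → ℕ`, viewed as an oracle. -/
def funOracle (f : ℕ → ℕ) : ℕ →. ℕ := fun n => Part.some (f n)

/-- `f` dominates every computable function. -/
def DominatesAllComputable (f : ℕ → ℕ) : Prop :=
  ∀ g : ℕ → ℕ, Computable g → ∃ N, ∀ n ≥ N, g n ≤ f n

/-- A prefix-free machine. -/
structure PrefixMachine where
  M : BinStr →. BinStr
  partrec : Partrec M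
  prefixFree : ∀ p q : BinStr, (M p).Dom → (M q).Dom → p <+: q → p = q

/-- `K` is (the complexity function of) an optimal universal prefix-free machine:
prefix-free Kolmogorov complexity. -/
def IsKolmogorov (K : BinStr → ℕ) : Prop :=
  ∃ U : PrefixMachine,
    (∀ σ : BinStr, ∃ p : BinStr, p.length = K σ ∧ σ ∈ U.M p) ∧
    (∀ σ p : BinStr, σ ∈ U.M p → K σ ≤ p.length) ∧
    (∀ N : PrefixMachine, ∃ c : ℕ, ∀ σ p : BinStr, σ ∈ N.M p → K σ ≤ p.length + c)

/-- The randomness deficiency function `d_e(σ) = -log μ_e(σ) - K(σ)` (partial). -/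
noncomputable def defic (E : MeasEnum) (K : BinStr → ℕ) (e : ℕ) (σ : BinStr) : Part ℝ :=
  (E.μ e σ).map fun x => -Real.logb 2 x - (K σ : ℝ)

/-- The `μ_e`-randomness deficiency of the real `X` is at most `b`:
every defined value `d_e(X↾n)` is at most `b`. -/
def DeficBoundedBy (E : MeasEnum) (K : BinStr → ℕ) (e : ℕ) (X : CantorReal) (b : ℝ) : Prop :=
  ∀ n : ℕ, ∀ r ∈ defic E K e (prefixOf X n), r ≤ b

/-- Value of a partial real, defaulting to `0`. -/
noncomputable def partVal (p : Part ℝ) : ℝ := if h : p.Dom then p.get h else 0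

/-- The minimal (with respect to the prefix order) strings of a finite set of strings. -/
def minimalStrings (D : Finset BinStr) : Finset BinStr :=
  D.filter fun σ => ∀ τ ∈ D, τ <+: σ → τ = σ

/-- `μ_e(D)` for an (explicitly given) finite set of strings `D`: defined iff `μ_e(σ)` is
defined for all `σ ∈ D`, with value the measure of the generated (clopen) set. -/
noncomputable def finsetMeas (E : MeasEnum) (e : ℕ) (D : List BinStr) : Part ℝ :=
  if ∀ σ ∈ D, (E.μ e σ).Dom
  then Part.some (∑ σ ∈ minimalStrings D.toFinset, partVal (E.μ e σ))
  else Part.none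

/-- A uniform sequence of clopen tests: `G i` is a clopen `μ_i`-test for each `i`,
uniformly partial computably in `i` (members are explicitly given finite sets of strings,
coded as lists). -/
def ClopenTestSeq (E : MeasEnum) (G : ℕ → ℕ →. List BinStr) : Prop :=
  (Partrec fun x : ℕ × ℕ => G x.1 x.2) ∧
  ∀ i j, (G i j).Dom → ∀ k ≤ j, (G i k).Dom ∧
    ∀ D ∈ G i k, ∃ r ∈ finsetMeas E i D, r ≤ (2:ℝ) ^ (-(k:ℤ))

/-- The time-complexity of `μ_i`: the least stage `s` by which `μ_i(σ)[s]↓` for all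
strings `σ` of length at most `n`. -/
noncomputable def timeCplx (E : MeasEnum) (i n : ℕ) : Part ℕ :=
  ⟨∃ s, ∀ σ : BinStr, σ.length ≤ n → E.conv i s σ = true, fun h => Nat.find h⟩

/-- The time-complexity of `μ_i` dominates `h`: it is total and exceeds `h(n)` for all but
finitely many `n`, or it is undefined from some point on. -/
def TimeDominates (E : MeasEnum) (i : ℕ) (h : ℕ → ℕ) : Prop :=
  ((∀ n, (timeCplx E i n).Dom) ∧ ∃ N, ∀ n ≥ N, ∀ s ∈ timeCplx E i n, h n < s) ∨
  (∃ N, ∀ n ≥ N, ¬ (timeCplx E i n).Dom)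

/-- `m` is relatively identical to the uniform measure for strings of length in `[a, b)`:
the conditional splitting ratios are `1/2` (stated in cross-multiplied form). -/
def RelIdUniform (m : MeasureRep) (a b : ℕ) : Prop :=
  ∀ σ : BinStr, ∀ j : Bool, a ≤ σ.length → σ.length < b →
    2 * m.val (σ ++ [j]) = m.val σ

/-- `m` is a `p`-sparse measure. -/
def PSparseMeasure (m : MeasureRep) (p : ℕ → ℕ) : Prop :=
  ∃ ns : ℕ → ℕ, (∀ i, p (ns i) < ns (i + 1)) ∧
    ∀ i, RelIdUniform m (ns i + 1) (ns (i + 1) + 1)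

/-- The set of reals avoiding every string in `U` (a closed, Π⁰₁-style class when `U` is c.e.). -/
def avoidSet (U : Set BinStr) : Set CantorReal := { X | ∀ n, prefixOf X n ∉ U }

/-- Outer measure of a set of reals induced by a measure representation. -/
noncomputable def outerMeas (m : MeasureRep) (S : Set CantorReal) : ℝ :=
  sInf { x : ℝ | ∃ U : Set BinStr, (∀ X ∈ S, ∃ n, prefixOf X n ∈ U) ∧ x = openMeas m U }

/-- Inner measure of a set of reals induced by a measure representation. -/
noncomputable def innerMeas (m : MeasureRep) (S : Set CantorReal) : ℝ :=
  sSup { x : ℝ | ∃ U : Set BinStr, avoidSet U ⊆ S ∧ x = 1 - openMeas m U }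

/-- Evaluation of an oracle code which additionally records the (finite) set of
oracle queries made during the computation. -/
def OCode.evalQ (O : ℕ →. ℕ) : OCode → ℕ →. (ℕ × Finset ℕ)
  | .zero => fun _ => Part.some (0, ∅)
  | .succ => fun n => Part.some (n + 1, ∅)
  | .left => fun n => Part.some ((Nat.unpair n).1, ∅)
  | .right => fun n => Part.some ((Nat.unpair n).2, ∅)
  | .oracle => fun n => (O n).map fun v => (v, {n})
  | .pair a b => fun n => do
      let x ← OCode.evalQ O a n
      let y ← OCode.evalQ O b n
      Part.some (Nat.pair x.1 y.1, x.2 ∪ y.2)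
  | .comp a b => fun n => do
      let x ← OCode.evalQ O b n
      let y ← OCode.evalQ O a x.1
      Part.some (y.1, x.2 ∪ y.2)
  | .prec a b =>
    Nat.unpaired fun x y =>
      y.rec (OCode.evalQ O a x) fun y IH => do
        let i ← IH
        let r ← OCode.evalQ O b (Nat.pair x (Nat.pair y i.1))
        Part.some (r.1, i.2 ∪ r.2)
  | .rfind' a =>
    Nat.unpaired fun x m => do
      let n ← Nat.rfind fun n => (fun p => p.1 = 0) <$> OCode.evalQ O a (Nat.pair x (n + m))
      let l ← (List.range (n + 1)).mapM fun k => OCode.evalQ O a (Nat.pair x (k + m))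
      Part.some (n + m, l.foldl (fun s p => s ∪ p.2) ∅)

namespace Stmt10Aux

lemma prefixOf_length (X : CantorReal) (n : ℕ) : (prefixOf X n).length = n := by
  simp [prefixOf]

lemma prefixOf_succ (X : CantorReal) (n : ℕ) :
    prefixOf X (n+1) = prefixOf X n ++ [X n] := by
  simp [prefixOf, List.range_succ]

/-- Cardinality of the set of length-`n` extensions of `ρ`. -/
lemma card_exts (ρ : BinStr) (n : ℕ) (hn : ρ.length ≤ n) :
    (Finset.univ.filter fun v : Fin n → Bool => ρ <+: List.ofFn v).card
      = 2 ^ (n - ρ.length) := by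
  classical
  have key : (Finset.univ.filter fun v : Fin n → Bool => ρ <+: List.ofFn v).card
      = (Finset.univ : Finset (Fin (n - ρ.length) → Bool)).card := by
    refine Finset.card_bij'
      (i := fun v _ => fun j : Fin (n - ρ.length) => v ⟨ρ.length + j.1, by have := j.2; omega⟩)
      (j := fun w _ => fun i : Fin n => if h : i.1 < ρ.length then ρ.get ⟨i.1, h⟩
        else w ⟨i.1 - ρ.length, by have := i.2; omega⟩)
      (fun v hv => Finset.mem_univ _) ?_ ?_ ?_
    · intro w _
      refine Finset.mem_filter.2 ⟨Finset.mem_univ _, ?_⟩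
      have heq : List.ofFn (fun i : Fin n => if h : i.1 < ρ.length then ρ.get ⟨i.1, h⟩
          else w ⟨i.1 - ρ.length, by have := i.2; omega⟩)
          = ρ ++ List.ofFn w := by
        apply List.ext_getElem
        · simp; omega
        · intro i h1 h2
          simp only [List.getElem_ofFn, List.getElem_append, List.length_ofFn]
          split_ifs with h3
          · exact rfl
          · exact rfl
      rw [heq]
      exact ⟨List.ofFn w, rfl⟩
    · intro v hv
      have hpre := (Finset.mem_filter.1 hv).2
      funext i
      dsimp only
      split_ifs with h
      · have h3 := hpre.getElem (i := i.1) h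
        rw [List.getElem_ofFn] at h3
        rw [List.get_eq_getElem]
        exact h3.trans (congrArg v (Fin.ext rfl))
      · exact congrArg v (Fin.ext (show ρ.length + (i.1 - ρ.length) = i.1 by omega))
    · intro w _
      funext j
      dsimp only
      rw [dif_neg (by omega)]
      exact congrArg w (Fin.ext (show ρ.length + j.1 - ρ.length = j.1 by omega))
  rw [key, Finset.card_univ, Fintype.card_fun]
  simp

/-- Kraft's inequality for the uniform measure. -/
lemma kraft {F : Finset BinStr} (hF : PrefixFree F) :
    ∑ ρ ∈ F, (2:ℝ) ^ (-(ρ.length:ℤ)) ≤ 1 := by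
  classical
  set n := F.sup List.length with hn
  have hlen : ∀ ρ ∈ F, ρ.length ≤ n := fun ρ hρ => Finset.le_sup hρ
  have hnat : ∑ ρ ∈ F, 2 ^ (n - ρ.length) ≤ 2 ^ n := by
    have hdisj : ∀ x ∈ F, ∀ y ∈ F, x ≠ y →
        Disjoint (Finset.univ.filter fun v : Fin n → Bool => x <+: List.ofFn v)
          (Finset.univ.filter fun v : Fin n → Bool => y <+: List.ofFn v) := by
      intro x hx y hy hxy
      refine Finset.disjoint_left.2 fun v hvx hvy => ?_
      have h1 := (Finset.mem_filter.1 hvx).2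
      have h2 := (Finset.mem_filter.1 hvy).2
      rcases List.prefix_or_prefix_of_prefix h1 h2 with h | h
      · exact hxy (hF x hx y hy h)
      · exact hxy ((hF y hy x hx h).symm)
    calc ∑ ρ ∈ F, 2 ^ (n - ρ.length)
        = ∑ ρ ∈ F, (Finset.univ.filter fun v : Fin n → Bool => ρ <+: List.ofFn v).card :=
          Finset.sum_congr rfl fun ρ hρ => (card_exts ρ n (hlen ρ hρ)).symm
      _ = (F.biUnion fun ρ => Finset.univ.filter fun v : Fin n → Bool => ρ <+: List.ofFn v).card :=
          (Finset.card_biUnion hdisj).symm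
      _ ≤ (Finset.univ : Finset (Fin n → Bool)).card := Finset.card_le_card (Finset.subset_univ _)
      _ = 2 ^ n := by simp
  have cast1 : ∀ ρ ∈ F, (2:ℝ) ^ (-(ρ.length:ℤ))
      = ((2:ℝ) ^ (n - ρ.length : ℕ)) * (2:ℝ) ^ (-(n:ℤ)) := by
    intro ρ hρ
    rw [← zpow_natCast (2:ℝ) (n - ρ.length), ← zpow_add₀ (two_ne_zero)]
    congr 1
    rw [Nat.cast_sub (hlen ρ hρ)]
    ring
  calc ∑ ρ ∈ F, (2:ℝ) ^ (-(ρ.length:ℤ))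
      = (∑ ρ ∈ F, (2:ℝ) ^ (n - ρ.length : ℕ)) * (2:ℝ) ^ (-(n:ℤ)) := by
        rw [Finset.sum_mul]; exact Finset.sum_congr rfl cast1
    _ ≤ ((2:ℝ) ^ n) * (2:ℝ) ^ (-(n:ℤ)) := by
        have h2 : ((∑ ρ ∈ F, 2 ^ (n - ρ.length) : ℕ) : ℝ) ≤ ((2 ^ n : ℕ) : ℝ) := by
          exact_mod_cast hnat
        push_cast at h2
        exact mul_le_mul_of_nonneg_right h2 (by positivity)
    _ = 1 := by
        rw [← zpow_natCast (2:ℝ) n, ← zpow_add₀ (two_ne_zero)]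
        simp

lemma sum_le_openMeas {F : Finset BinStr} {W : Set BinStr}
    (hFW : ↑F ⊆ W) (hF : PrefixFree F) :
    ∑ ρ ∈ F, (2:ℝ) ^ (-(ρ.length:ℤ)) ≤ openMeas uniformMeasure W := by
  have hval : ∀ G : Finset BinStr, ∑ σ ∈ G, uniformMeasure.val σ
      = ∑ σ ∈ G, (2:ℝ) ^ (-(σ.length:ℤ)) := fun G => rfl
  apply le_csSup
  · refine ⟨1, ?_⟩
    rintro x ⟨G, hGW, hG, rfl⟩
    rw [hval]
    exact kraft hG
  · exact ⟨F, hFW, hF, (hval F).symm⟩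

/-- Cover a set of length-`n` strings by a prefix-free subset of `W`. -/
lemma cover_sum {n : ℕ} {W : Set BinStr} (P : Finset (Fin n → Bool))
    (hP : ∀ v ∈ P, ∃ ρ ∈ W, ρ <+: List.ofFn v) :
    ∃ F : Finset BinStr, ↑F ⊆ W ∧ PrefixFree F ∧
      (P.card : ℝ) * (2:ℝ) ^ (-(n:ℤ)) ≤ ∑ ρ ∈ F, (2:ℝ) ^ (-(ρ.length:ℤ)) := by
  classical
  set g : (Fin n → Bool) → BinStr := fun v =>
    if h : ∃ k, (List.ofFn v).take k ∈ W then (List.ofFn v).take (Nat.find h) else [] with hg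
  have hgP : ∀ v ∈ P, g v ∈ W ∧ g v <+: List.ofFn v ∧
      ∀ ρ ∈ W, ρ <+: List.ofFn v → (g v).length ≤ ρ.length := by
    intro v hv
    obtain ⟨ρ, hρW, hρpre⟩ := hP v hv
    have hex : ∃ k, (List.ofFn v).take k ∈ W := by
      refine ⟨ρ.length, ?_⟩
      rw [← List.prefix_iff_eq_take.1 hρpre]
      exact hρW
    rw [hg]; dsimp only; rw [dif_pos hex]
    refine ⟨Nat.find_spec hex, List.take_prefix _ _, ?_⟩
    intro ρ' hρ'W hρ'pre
    have hfind : Nat.find hex ≤ ρ'.length := by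
      apply Nat.find_min' hex
      rw [← List.prefix_iff_eq_take.1 hρ'pre]
      exact hρ'W
    calc ((List.ofFn v).take (Nat.find hex)).length ≤ Nat.find hex := by
          rw [List.length_take]; omega
      _ ≤ ρ'.length := hfind
  refine ⟨P.image g, ?_, ?_, ?_⟩
  · intro ρ hρ
    obtain ⟨v, hv, rfl⟩ := Finset.mem_image.1 (by exact_mod_cast hρ)
    exact (hgP v hv).1
  · intro ρ hρ τ hτ hpre
    obtain ⟨v, hv, rfl⟩ := Finset.mem_image.1 hρ
    obtain ⟨w, hw, rfl⟩ := Finset.mem_image.1 hτ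
    have h1 : g v <+: List.ofFn w := hpre.trans (hgP w hw).2.1
    have h2 : (g w).length ≤ (g v).length := (hgP w hw).2.2 (g v) (hgP v hv).1 h1
    exact hpre.eq_of_length (le_antisymm hpre.length_le h2)
  · have hsub : P ⊆ (P.image g).biUnion
        (fun ρ => Finset.univ.filter fun v : Fin n → Bool => ρ <+: List.ofFn v) := by
      intro v hv
      exact Finset.mem_biUnion.2 ⟨g v, Finset.mem_image_of_mem _ hv,
        Finset.mem_filter.2 ⟨Finset.mem_univ _, (hgP v hv).2.1⟩⟩
    have hlenle : ∀ ρ ∈ P.image g, ρ.length ≤ n := by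
      intro ρ hρ
      obtain ⟨v, hv, rfl⟩ := Finset.mem_image.1 hρ
      have := (hgP v hv).2.1.length_le
      rwa [List.length_ofFn] at this
    have hcard : P.card ≤ ∑ ρ ∈ P.image g, 2 ^ (n - ρ.length) := by
      calc P.card ≤ ((P.image g).biUnion
            (fun ρ => Finset.univ.filter fun v : Fin n → Bool => ρ <+: List.ofFn v)).card :=
            Finset.card_le_card hsub
        _ ≤ ∑ ρ ∈ P.image g,
              (Finset.univ.filter fun v : Fin n → Bool => ρ <+: List.ofFn v).card :=
            Finset.card_biUnion_le
        _ = ∑ ρ ∈ P.image g, 2 ^ (n - ρ.length) :=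
            Finset.sum_congr rfl fun ρ hρ => card_exts ρ n (hlenle ρ hρ)
    have cast1 : ∀ ρ ∈ P.image g, ((2:ℝ) ^ (n - ρ.length : ℕ)) * (2:ℝ) ^ (-(n:ℤ))
        = (2:ℝ) ^ (-(ρ.length:ℤ)) := by
      intro ρ hρ
      rw [← zpow_natCast (2:ℝ) (n - ρ.length), ← zpow_add₀ (two_ne_zero)]
      congr 1
      rw [Nat.cast_sub (hlenle ρ hρ)]
      ring
    calc (P.card : ℝ) * (2:ℝ) ^ (-(n:ℤ))
        ≤ (∑ ρ ∈ P.image g, (2:ℝ) ^ (n - ρ.length : ℕ)) * (2:ℝ) ^ (-(n:ℤ)) := by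
          apply mul_le_mul_of_nonneg_right _ (by positivity)
          have h2 : ((P.card : ℕ) : ℝ) ≤ ((∑ ρ ∈ P.image g, 2 ^ (n - ρ.length) : ℕ) : ℝ) := by
            exact_mod_cast hcard
          push_cast at h2
          exact h2
      _ = ∑ ρ ∈ P.image g, (2:ℝ) ^ (-(ρ.length:ℤ)) := by
          rw [Finset.sum_mul]; exact Finset.sum_congr rfl cast1

/-- The `c`-th candidate uniformly c.e. sequence of sets of strings. -/
def Ucode (c i : ℕ) : Set BinStr :=
  {σ | ((Denumerable.ofNat Nat.Partrec.Code c).eval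
    (Encodable.encode ((i, σ) : ℕ × BinStr))).Dom}

lemma exists_code {U : ℕ → Set BinStr} (hU : MLTest uniformMeasure U) :
    ∃ c : ℕ, MLTest uniformMeasure (Ucode c) ∧ ∀ i, U i = Ucode c i := by
  obtain ⟨hre, hmeas⟩ := hU
  have hre' : Nat.Partrec fun nn =>
      ((Encodable.decode (α := ℕ × BinStr) nn : Option (ℕ × BinStr)) : Part (ℕ × BinStr)).bind
      fun a => Part.map Encodable.encode
        (Part.assert (a.2 ∈ U a.1) fun _ => Part.some ()) := hre
  obtain ⟨c, hc⟩ := Nat.Partrec.Code.exists_code.1 hre'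
  have key : ∀ i, U i = Ucode (Encodable.encode c) i := by
    intro i
    ext σ
    show σ ∈ U i ↔ _
    unfold Ucode
    rw [Set.mem_setOf_eq, Denumerable.ofNat_encode, hc]
    simp [Encodable.encodek, Part.assert, Seq.seq]
  have hUeq : U = Ucode (Encodable.encode c) := funext key
  exact ⟨Encodable.encode c, hUeq ▸ ⟨hre, hmeas⟩, fun i => (hUeq ▸ rfl : U i = _)⟩

/-- extendibility within a tree `T`. -/
def ExtT (T : BinStr → Prop) (τ : BinStr) : Prop :=
  ∀ n, τ.length ≤ n → ∃ τ', τ'.length = n ∧ T τ' ∧ τ <+: τ'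

lemma extT_self {T : BinStr → Prop} {τ : BinStr} (h : ExtT T τ) : T τ := by
  obtain ⟨τ', hlen, hT, hpre⟩ := h τ.length le_rfl
  have heq : τ = τ' := hpre.eq_of_length hlen.symm
  rw [heq]; exact hT

lemma extT_step {T : BinStr → Prop}
    (hh : ∀ τ τ', τ <+: τ' → T τ' → T τ) {τ : BinStr} (h : ExtT T τ) :
    ∃ b : Bool, ExtT T (τ ++ [b]) := by
  by_contra hcon
  push_neg at hcon
  have hcon' : ∀ b : Bool, ∃ n, (τ ++ [b]).length ≤ n ∧
      ∀ τ', τ'.length = n → T τ' → ¬ (τ ++ [b]) <+: τ' := by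
    intro b
    have h1 := hcon b
    unfold ExtT at h1
    push_neg at h1
    obtain ⟨n, hn1, hn2⟩ := h1
    exact ⟨n, hn1, fun τ' ha hb hc => hn2 τ' ha hb hc⟩
  obtain ⟨n0, hn0l, h0⟩ := hcon' false
  obtain ⟨n1, hn1l, h1⟩ := hcon' true
  simp only [List.length_append, List.length_singleton] at hn0l hn1l
  obtain ⟨τ', hlen', hT', hpre'⟩ := h (max n0 n1) (by omega)
  have hlt : τ.length < τ'.length := by omega
  set b := τ'.get ⟨τ.length, hlt⟩ with hb
  have hpre2 : τ ++ [b] = τ'.take (τ.length + 1) := by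
    have h3 : τ = τ'.take τ.length := List.prefix_iff_eq_take.1 hpre'
    rw [List.take_succ]
    rw [← h3]
    congr
    rw [List.getElem?_eq_getElem hlt]
    rfl
  have key : ∀ nb : ℕ, τ.length + 1 ≤ nb → nb ≤ max n0 n1 →
      (τ ++ [b]) <+: τ'.take nb ∧ (τ'.take nb).length = nb ∧ T (τ'.take nb) := by
    intro nb hnb1 hnb2
    refine ⟨?_, ?_, hh _ _ (List.take_prefix _ _) hT'⟩
    · rw [hpre2]
      exact List.take_isPrefix_take.2 (Or.inl hnb1)
    · rw [List.length_take]; omega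
  cases hbv : b with
  | false =>
      have hk := key n0 (by omega) (le_max_left _ _)
      rw [hbv] at hk
      exact h0 _ hk.2.1 hk.2.2 hk.1
  | true =>
      have hk := key n1 (by omega) (le_max_right _ _)
      rw [hbv] at hk
      exact h1 _ hk.2.1 hk.2.2 hk.1

lemma koenig {T : BinStr → Prop}
    (hh : ∀ τ τ', τ <+: τ' → T τ' → T τ)
    (hne : ∀ n, ∃ τ : BinStr, τ.length = n ∧ T τ) :
    ∃ X : CantorReal, ∀ n, T (prefixOf X n) := by
  classical
  have hext0 : ExtT T [] := by
    intro n _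
    obtain ⟨τ, h1, h2⟩ := hne n
    exact ⟨τ, h1, h2, List.nil_prefix⟩
  have hstep' : ∀ τ : {τ : BinStr // ExtT T τ}, ∃ b : Bool, ExtT T (τ.1 ++ [b]) :=
    fun τ => extT_step hh τ.2
  choose step hstep using hstep'
  let F : {τ : BinStr // ExtT T τ} → {τ : BinStr // ExtT T τ} :=
    fun τ => ⟨τ.1 ++ [step τ], hstep τ⟩
  let g : ℕ → {τ : BinStr // ExtT T τ} := fun n => F^[n] ⟨[], hext0⟩
  have hgsucc : ∀ n, (g (n+1)).1 = (g n).1 ++ [step (g n)] := by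
    intro n
    show (F^[n+1] ⟨[], hext0⟩).1 = _
    rw [Function.iterate_succ_apply']
  have hglen : ∀ n, (g n).1.length = n := by
    intro n
    induction n with
    | zero => rfl
    | succ n ih => rw [hgsucc]; simp [ih]
  refine ⟨fun n => step (g n), fun n => ?_⟩
  have hpre : ∀ m, prefixOf (fun n => step (g n)) m = (g m).1 := by
    intro m
    induction m with
    | zero => rfl
    | succ m ih => rw [prefixOf_succ, ih, hgsucc]
  rw [hpre n]
  exact extT_self (g n).2

/-- Persistence of the learner's prediction along `τ` (relative to `σ`). -/
def Pers (L : BinStr → ℕ) (σ τ : BinStr) : Prop :=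
  (τ <+: σ ∨ σ <+: τ) ∧ ∀ ρ : BinStr, σ <+: ρ → ρ <+: τ → L ρ = L σ

lemma pers_hered (L : BinStr → ℕ) (σ : BinStr) :
    ∀ τ τ', τ <+: τ' → Pers L σ τ' → Pers L σ τ := by
  rintro τ τ' hpre ⟨hcomp, hper⟩
  constructor
  · rcases hcomp with h | h
    · exact Or.inl (hpre.trans h)
    · exact List.prefix_or_prefix_of_prefix hpre h
  · exact fun ρ h1 h2 => hper ρ h1 (h2.trans hpre)

end Stmt10Aux


/-- If a computable learner `L` EX-succeeds on the uniform measure, then for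
every string `σ`, with `e = L(σ)`, there is `n_σ > 2|σ|` such that either `μ_e(τ)[n_σ]↓` for all
`τ` of length at most `|σ|`, or the proportion of extensions `τ` of `σ` of length `n_σ` on which
the prediction `L(σ)` persists is less than `2^{-|σ|-5}`. -/
theorem convergence_or_small_persistence (E : MeasEnum) (L : BinStr → ℕ) (hL : Computable L)
    (hs : EXSucceedsOn E L uniformMeasure) :
    ∀ σ : BinStr, ∃ nσ : ℕ, 2 * σ.length < nσ ∧
      ((∀ τ : BinStr, τ.length ≤ σ.length → E.conv (L σ) nσ τ = true) ∨
        ((Finset.univ.filter fun v : Fin nσ → Bool =>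
            σ <+: List.ofFn v ∧
            ∀ ρ : BinStr, σ <+: ρ → ρ <+: List.ofFn v → L ρ = L σ).card : ℝ) <
          (2:ℝ) ^ ((nσ : ℤ) - σ.length) * (2:ℝ) ^ (-(σ.length : ℤ) - 5)) := by
  classical
  intro σ
  by_cases hdom : ∀ τ : BinStr, τ.length ≤ σ.length → (E.μ (L σ) τ).Dom
  · -- Case A : μ_{L σ} is defined on all strings of length ≤ |σ|
    set f : BinStr → ℕ := fun τ => if h : ∃ s, E.conv (L σ) s τ = true then Nat.find h else 0
      with hf
    set S : Finset BinStr := (Finset.range (σ.length+1)).biUnion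
      (fun k => (Finset.univ : Finset (Fin k → Bool)).image List.ofFn) with hS
    have hmemS : ∀ τ : BinStr, τ.length ≤ σ.length → τ ∈ S := by
      intro τ hτ
      refine Finset.mem_biUnion.2 ⟨τ.length, Finset.mem_range.2 (by omega), ?_⟩
      exact Finset.mem_image.2 ⟨τ.get, Finset.mem_univ _, List.ofFn_get τ⟩
    refine ⟨max (2*σ.length+1) (S.sup f), lt_of_lt_of_le (by omega) (le_max_left _ _), Or.inl ?_⟩
    intro τ hτ
    have hex : ∃ s, E.conv (L σ) s τ = true := (E.conv_dom (L σ) τ).1 (hdom τ hτ)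
    have h1 : E.conv (L σ) (f τ) τ = true := by
      rw [hf]; dsimp only; rw [dif_pos hex]; exact Nat.find_spec hex
    exact E.conv_mono (L σ) (f τ) _ τ
      (le_trans (Finset.le_sup (hmemS τ hτ)) (le_max_right _ _)) h1
  · -- Case B
    push_neg at hdom
    obtain ⟨τ₀, hτ₀len, hτ₀⟩ := hdom
    by_contra hcon
    push_neg at hcon
    set I : ℕ := 2 * σ.length + 7 with hI
    set V : Set BinStr :=
      {ρ | ∃ c : ℕ, MLTest uniformMeasure (Stmt10Aux.Ucode c) ∧ ρ ∈ Stmt10Aux.Ucode c (I + c)}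
      with hV
    have hPV : ∀ X : CantorReal, (∀ n, Stmt10Aux.Pers L σ (prefixOf X n)) →
        ∃ n, prefixOf X n ∈ V := by
      intro X hXp
      have hσX : ∀ n, σ.length ≤ n → σ <+: prefixOf X n := by
        intro n hn
        rcases (hXp n).1 with h | h
        · have heq : prefixOf X n = σ := h.eq_of_length (by
            have h2 := h.length_le
            rw [Stmt10Aux.prefixOf_length] at h2 ⊢
            omega)
          rw [heq]
        · exact h
      have hnr : ¬ MLRandom uniformMeasure X := by
        intro hrand
        obtain ⟨i, m, ⟨N, hN⟩, htot, _⟩ := hs X hrand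
        have hie : i = L σ := by
          have hn := hN (max N σ.length) (le_max_left _ _)
          have hLσ : L (prefixOf X (max N σ.length)) = L σ :=
            (hXp (max N σ.length)).2 _ (hσX _ (le_max_right _ _)) (List.prefix_refl _)
          rw [hLσ] at hn
          exact hn.symm
        apply hτ₀
        have h3 := htot τ₀
        rw [hie] at h3
        rw [h3]
        trivial
      unfold MLRandom at hnr
      push_neg at hnr
      obtain ⟨U, hUtest, hUhit⟩ := hnr
      obtain ⟨c, hUc_test, hUceq⟩ := Stmt10Aux.exists_code hUtest
      obtain ⟨nn, hnn⟩ := hUhit (I + c)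
      refine ⟨nn, c, hUc_test, ?_⟩
      rw [← hUceq (I + c)]
      exact hnn
    set T : BinStr → Prop := fun τ => Stmt10Aux.Pers L σ τ ∧ ∀ ρ, ρ <+: τ → ρ ∉ V with hT
    have hhered : ∀ τ τ', τ <+: τ' → T τ' → T τ := by
      rintro τ τ' hpre ⟨hp, hv⟩
      exact ⟨Stmt10Aux.pers_hered L σ τ τ' hpre hp, fun ρ hρ => hv ρ (hρ.trans hpre)⟩
    have hlevel : ∃ n₀, ∀ τ : BinStr, τ.length = n₀ → ¬ T τ := by
      by_contra hlev
      push_neg at hlev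
      obtain ⟨X, hX⟩ := Stmt10Aux.koenig hhered (fun n => hlev n)
      obtain ⟨nn, hnV⟩ := hPV X (fun n => (hX n).1)
      exact (hX nn).2 _ (List.prefix_refl _) hnV
    obtain ⟨n₀, hn₀⟩ := hlevel
    set n := n₀ + 2 * σ.length + 6 with hn
    have hnbig : 2 * σ.length < n := by omega
    have hthr := (hcon n hnbig).2
    have hPV2 : ∀ v ∈ (Finset.univ.filter fun v : Fin n → Bool =>
        σ <+: List.ofFn v ∧
        ∀ ρ : BinStr, σ <+: ρ → ρ <+: List.ofFn v → L ρ = L σ),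
        ∃ ρ ∈ V, ρ <+: List.ofFn v := by
      intro v hv
      obtain ⟨h1, h2⟩ := (Finset.mem_filter.1 hv).2
      have hw : Stmt10Aux.Pers L σ (List.ofFn v) := ⟨Or.inr h1, h2⟩
      have hu : Stmt10Aux.Pers L σ ((List.ofFn v).take n₀) :=
        Stmt10Aux.pers_hered L σ _ _ (List.take_prefix _ _) hw
      have hlen : ((List.ofFn v).take n₀).length = n₀ := by
        rw [List.length_take, List.length_ofFn]; omega
      have hnt := hn₀ _ hlen
      have h3 : ¬ ∀ ρ, ρ <+: (List.ofFn v).take n₀ → ρ ∉ V := fun hcontra => hnt ⟨hu, hcontra⟩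
      push_neg at h3
      obtain ⟨ρ, hρ1, hρ2⟩ := h3
      exact ⟨ρ, hρ2, hρ1.trans (List.take_prefix _ _)⟩
    obtain ⟨F, hFV, hFpf, hFsum⟩ := Stmt10Aux.cover_sum _ hPV2
    set cdf : BinStr → ℕ := fun ρ =>
      if h : ∃ c, MLTest uniformMeasure (Stmt10Aux.Ucode c) ∧ ρ ∈ Stmt10Aux.Ucode c (I + c)
      then Classical.choose h else 0 with hcdf
    have hcdf_spec : ∀ ρ ∈ F, MLTest uniformMeasure (Stmt10Aux.Ucode (cdf ρ)) ∧
        ρ ∈ Stmt10Aux.Ucode (cdf ρ) (I + cdf ρ) := by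
      intro ρ hρ
      have hex : ∃ c, MLTest uniformMeasure (Stmt10Aux.Ucode c) ∧
          ρ ∈ Stmt10Aux.Ucode c (I + c) := hFV hρ
      rw [hcdf]; dsimp only; rw [dif_pos hex]
      exact Classical.choose_spec hex
    set C := F.image cdf with hC
    have hsum_eq : ∑ ρ ∈ F, (2:ℝ) ^ (-(ρ.length:ℤ))
        = ∑ c ∈ C, ∑ ρ ∈ F.filter (fun ρ => cdf ρ = c), (2:ℝ) ^ (-(ρ.length:ℤ)) :=
      (Finset.sum_fiberwise_of_maps_to (fun ρ hρ => Finset.mem_image_of_mem _ hρ) _).symm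
    have hfiber : ∀ c ∈ C, ∑ ρ ∈ F.filter (fun ρ => cdf ρ = c), (2:ℝ) ^ (-(ρ.length:ℤ))
        ≤ (2:ℝ) ^ (-((I + c : ℕ) : ℤ)) := by
      intro c hc
      obtain ⟨ρ₀, hρ₀F, hρ₀c⟩ := Finset.mem_image.1 hc
      have htest : MLTest uniformMeasure (Stmt10Aux.Ucode c) := hρ₀c ▸ (hcdf_spec ρ₀ hρ₀F).1
      have hsub : ↑(F.filter fun ρ => cdf ρ = c) ⊆ Stmt10Aux.Ucode c (I + c) := by
        intro ρ hρ
        have hρ' := Finset.mem_filter.1 (by exact_mod_cast hρ)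
        have h4 := (hcdf_spec ρ hρ'.1).2
        rw [hρ'.2] at h4
        exact h4
      have hpf : PrefixFree (F.filter fun ρ => cdf ρ = c) := by
        intro a ha b hb hab
        exact hFpf a (Finset.mem_of_mem_filter a ha) b (Finset.mem_of_mem_filter b hb) hab
      calc ∑ ρ ∈ F.filter (fun ρ => cdf ρ = c), (2:ℝ) ^ (-(ρ.length:ℤ))
          ≤ openMeas uniformMeasure (Stmt10Aux.Ucode c (I + c)) :=
            Stmt10Aux.sum_le_openMeas hsub hpf
        _ ≤ (2:ℝ) ^ (-((I + c : ℕ):ℤ)) := htest.2 (I + c)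
    have hgeo : ∑ c ∈ C, (2:ℝ) ^ (-((I + c : ℕ):ℤ)) ≤ (2:ℝ) ^ (-(I:ℤ)) * 2 := by
      have h1 : ∀ c ∈ C, (2:ℝ) ^ (-((I + c : ℕ):ℤ)) = (2:ℝ) ^ (-(I:ℤ)) * ((1:ℝ)/2) ^ c := by
        intro c _
        rw [one_div, inv_pow, ← zpow_natCast (2:ℝ) c, ← zpow_neg,
          ← zpow_add₀ (two_ne_zero : (2:ℝ) ≠ 0)]
        congr 1
        push_cast
        ring
      rw [Finset.sum_congr rfl h1, ← Finset.mul_sum]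
      have h2 : ∑ c ∈ C, ((1:ℝ)/2) ^ c ≤ 2 := by
        calc ∑ c ∈ C, ((1:ℝ)/2) ^ c ≤ ∑ c ∈ Finset.range (C.sup id + 1), ((1:ℝ)/2) ^ c := by
              apply Finset.sum_le_sum_of_subset_of_nonneg
              · intro c hc
                refine Finset.mem_range.2 ?_
                have h5 : id c ≤ C.sup id := Finset.le_sup hc
                simp at h5
                omega
              · intro i _ _
                positivity
          _ ≤ 2 := sum_geometric_two_le _
      exact mul_le_mul_of_nonneg_left h2 (by positivity)
    have hfinal : (2:ℝ) ^ ((n : ℤ) - σ.length) * (2:ℝ) ^ (-(σ.length : ℤ) - 5) * (2:ℝ) ^ (-(n:ℤ))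
        ≤ (2:ℝ) ^ (-(I:ℤ)) * 2 := by
      calc (2:ℝ) ^ ((n : ℤ) - σ.length) * (2:ℝ) ^ (-(σ.length : ℤ) - 5) * (2:ℝ) ^ (-(n:ℤ))
          ≤ (((Finset.univ.filter fun v : Fin n → Bool =>
              σ <+: List.ofFn v ∧
              ∀ ρ : BinStr, σ <+: ρ → ρ <+: List.ofFn v → L ρ = L σ).card : ℝ))
              * (2:ℝ) ^ (-(n:ℤ)) :=
            mul_le_mul_of_nonneg_right hthr (by positivity)
        _ ≤ ∑ ρ ∈ F, (2:ℝ) ^ (-(ρ.length:ℤ)) := hFsum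
        _ = ∑ c ∈ C, ∑ ρ ∈ F.filter (fun ρ => cdf ρ = c), (2:ℝ) ^ (-(ρ.length:ℤ)) := hsum_eq
        _ ≤ ∑ c ∈ C, (2:ℝ) ^ (-((I + c:ℕ):ℤ)) := Finset.sum_le_sum hfiber
        _ ≤ (2:ℝ) ^ (-(I:ℤ)) * 2 := hgeo
    have hLeft : (2:ℝ) ^ ((n : ℤ) - σ.length) * (2:ℝ) ^ (-(σ.length : ℤ) - 5)
        * (2:ℝ) ^ (-(n:ℤ)) = (2:ℝ) ^ (-(2 * σ.length : ℤ) - 5) := by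
      rw [← zpow_add₀ (two_ne_zero : (2:ℝ) ≠ 0), ← zpow_add₀ (two_ne_zero : (2:ℝ) ≠ 0)]
      congr 1
      push_cast
      ring
    have hRight : (2:ℝ) ^ (-(I:ℤ)) * 2 = (2:ℝ) ^ (-(2 * σ.length : ℤ) - 6) := by
      rw [← zpow_add_one₀ (two_ne_zero : (2:ℝ) ≠ 0)]
      congr 1
      rw [hI]
      push_cast
      ring
    rw [hLeft, hRight] at hfinal
    have hlt : (2:ℝ) ^ (-(2 * σ.length : ℤ) - 6) < (2:ℝ) ^ (-(2 * σ.length : ℤ) - 5) :=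
      zpow_lt_zpow_right₀ (by norm_num) (by omega)
    linarith
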